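/- Let $K$ be a field and $L$ a separable quadratic $K$-algebra with nontrivial involution $l \mapsto \bar{l}$ fixing $K$, and norm $n_L(l) = l\bar{l}$. Let $V$ be a free $L$-module and $h: V \to K$ a quadratic form (over $K$) satisfying $h(lx) = n_L(l)h(x)$ for all $l \in L$, $x \in V$. Then there exists a unique function $s: V \times V \to L$ which is $L$-linear in the first argument, satisfies $s(x,y) = \overline{s(y,x)}$, and $s(x,x) = h(x)$ for all $x \in V$. -/

import Mathlib

/-- existence and uniqueness of the hermitian symmetric form
attached to a quadratic form `h` on a free `L`-module `V` satisfying
`h (l • x) = n_L(l) h x`, where `L` is a separable quadratic `K`-algebra with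
involution `σ`. -/
theorem statement0
    (K : Type*) [Field K] (L : Type*) [CommRing L] [Algebra K L]
    (σ : L ≃ₐ[K] L) (hσinv : ∀ l, σ (σ l) = l)
    -- `L` is a separable quadratic `K`-algebra: generated by one element `π`
    -- with `σ π - π` invertible (in particular `σ π ≠ π`)
    (π : L) (hπgen : Algebra.adjoin K {π} = ⊤) (hπsep : IsUnit (σ π - π))
    (V : Type*) [AddCommGroup V] [Module L V] [Module.Free L V]
    (h : V → K)
    -- `h` is a quadratic form over `K` :
    (hsq : ∀ (c : K) (x : V), h ((algebraMap K L c) • x) = c ^ 2 * h x)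
    (hbil : ∀ x x' y : V,
      (h (x + x' + y) - h (x + x') - h y) =
        (h (x + y) - h x - h y) + (h (x' + y) - h x' - h y))
    -- `h (l • x) = n_L(l) • h x`, where `n_L l = l * σ l ∈ K` :
    (hherm : ∀ (l : L) (x : V),
      algebraMap K L (h (l • x)) = l * σ l * algebraMap K L (h x)) :
    ∃! s : V → V → L,
      (∀ x x' y : V, s (x + x') y = s x y + s x' y) ∧
      (∀ (l : L) (x y : V), s (l • x) y = l * s x y) ∧
      (∀ x y : V, s x y = σ (s y x)) ∧
      (∀ x : V, s x x = algebraMap K L (h x)) := by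
  classical
  obtain ⟨u, hu⟩ := hπsep
  set φ := algebraMap K L with hφ
  have hσφ : ∀ c : K, σ (φ c) = φ c := fun c => σ.commutes c
  have h0 : h 0 = 0 := by simpa using hsq 0 0
  set B : V → V → L := fun x y => φ (h (x + y)) - φ (h x) - φ (h y) with hBdef
  have Bsymm : ∀ x y, B x y = B y x := by
    intro x y; simp only [hBdef]; rw [add_comm]; ring
  have Badd1 : ∀ x x' y, B (x + x') y = B x y + B x' y := by
    intro x x' y
    have hb := congrArg φ (hbil x x' y)
    simp only [map_sub, map_add] at hb
    simp only [hBdef]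
    linear_combination hb
  have Badd2 : ∀ x y y', B x (y + y') = B x y + B x y' := by
    intro x y y'; rw [Bsymm, Badd1, Bsymm y x, Bsymm y' x]
  have B0 : ∀ y, B 0 y = 0 := by intro y; simp [hBdef, h0]
  have Bneg : ∀ x y, B (-x) y = -B x y := by
    intro x y
    have hb := Badd1 x (-x) y
    rw [add_neg_cancel, B0] at hb
    linear_combination -hb
  have Bsub1 : ∀ x x' y, B (x - x') y = B x y - B x' y := by
    intro x x' y; rw [sub_eq_add_neg, Badd1, Bneg]; ring
  have Bscale : ∀ (l : L) (x y : V), B (l • x) (l • y) = l * σ l * B x y := by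
    intro l x y
    simp only [hBdef, ← smul_add, hherm]
    ring
  have Bpolar : ∀ (l m : L) (x y : V),
      B (l • x) (m • y) + B (m • x) (l • y) = (l * σ m + m * σ l) * B x y := by
    intro l m x y
    have h1 := Bscale (l + m) x y
    rw [add_smul l m x, add_smul l m y, Badd1, Badd2, Badd2, map_add] at h1
    have h2 := Bscale l x y
    have h3 := Bscale m x y
    linear_combination h1 - h2 - h3
  have L3 : ∀ v w, B (π • v) w + B v (π • w) = (π + σ π) * B v w := by
    intro v w
    have hp := Bpolar π 1 v w
    simp only [one_smul, map_one, mul_one, one_mul] at hp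
    linear_combination hp
  have BP : ∀ v w, B (π • v) w + B (π • w) v = (π + σ π) * B v w := by
    intro v w
    have hp := L3 v w
    rw [Bsymm v (π • w)] at hp
    exact hp
  have hBxx : ∀ x, B x x = 2 * φ (h x) := by
    intro x
    have e1 : x + x = φ (2 : K) • x := by
      rw [map_ofNat, two_smul]
    have e2 : h (x + x) = 2 ^ 2 * h x := by rw [e1]; exact hsq 2 x
    simp only [hBdef, e2, map_mul, map_pow, map_ofNat]
    ring
  have hBdiagπ : ∀ x, B (π • x) x = (π + σ π) * φ (h x) := by
    intro x
    have e1 : π • x + x = (π + 1) • x := by rw [add_smul, one_smul]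
    have e2 := hherm (π + 1) x
    have e3 := hherm π x
    simp only [hBdef, e1]
    rw [e2, e3, map_add, map_one]
    ring
  have hσB : ∀ x y, σ (B x y) = B x y := by
    intro x y; simp only [hBdef, map_sub, hσφ]
  have hσuinv : σ ((↑u⁻¹ : L)) = -(↑u⁻¹ : L) := by
    have h1 : σ (↑u⁻¹ : L) * σ (u : L) = 1 := by rw [← map_mul, Units.inv_mul, map_one]
    have h2 : σ (u : L) = -(u : L) := by rw [hu, map_sub, hσinv]; ring
    rw [h2] at h1
    have h3 : σ (↑u⁻¹ : L) * -(u : L) * (↑u⁻¹ : L) = (↑u⁻¹ : L) := by rw [h1, one_mul]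
    rw [mul_assoc, show -(u : L) * (↑u⁻¹ : L) = -1 from by rw [neg_mul, Units.mul_inv]] at h3
    linear_combination -h3
  -- the F-chain towards K-semilinearity
  have F0 : ∀ (c : K) (v w : V),
      B (φ c • v) w - φ c * B v w = -(B (φ c • w) v - φ c * B w v) := by
    intro c v w
    have hp := Bpolar (φ c) 1 v w
    simp only [one_smul, map_one, mul_one, one_mul, hσφ] at hp
    rw [Bsymm v (φ c • w)] at hp
    have hs := Bsymm v w
    linear_combination hp + φ c * hs
  have F1 : ∀ (c : K) (v w : V),
      (B (φ c • (π • v)) w - φ c * B (π • v) w) + (B (φ c • v) (π • w) - φ c * B v (π • w))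
        = (π + σ π) * (B (φ c • v) w - φ c * B v w) := by
    intro c v w
    have h1 := L3 (φ c • v) w
    rw [smul_comm π (φ c) v] at h1
    have h2 := L3 v w
    linear_combination h1 - φ c * h2
  have F2' : ∀ (c : K) (v w : V),
      B (φ c • v) (π • w) - φ c * B v (π • w)
        = -(B (φ c • w) (π • v) - φ c * B w (π • v)) := by
    intro c v w
    have hp := Bpolar (φ c) π v w
    rw [hσφ] at hp
    rw [Bsymm (π • v) (φ c • w)] at hp
    rw [show B v (π • w) = B (π • w) v from Bsymm _ _,
        show B w (π • v) = B (π • v) w from Bsymm _ _]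
    linear_combination hp - φ c * BP v w
  have F2 : ∀ (c : K) (v w : V),
      B (φ c • (π • v)) w - φ c * B (π • v) w
        = B (φ c • v) (π • w) - φ c * B v (π • w) := by
    intro c v w
    have h1 := F0 c (π • v) w
    have h2 := F2' c w v
    linear_combination h1 - h2
  have G : ∀ (c : K) (v w : V),
      2 * (B (φ c • (π • v)) w - φ c * B (π • v) w)
        = (π + σ π) * (B (φ c • v) w - φ c * B v w) := by
    intro c v w
    linear_combination F1 c v w + F2 c v w
  -- the main semilinearity statement
  have main : ∀ (l : L) (x y : V),
      σ π * B (l • x) y - B (π • (l • x)) y = l * (σ π * B x y - B (π • x) y) := by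
    by_cases hall : ∀ v : V, h v = 0
    · intro l x y; simp [hBdef, hall]
    · push_neg at hall
      obtain ⟨x₀, hx₀⟩ := hall
      have hNunit : IsUnit (φ (h x₀)) :=
        IsUnit.of_mul_eq_one (a := φ (h x₀)) (φ ((h x₀)⁻¹))
          (by rw [← map_mul, mul_inv_cancel₀ hx₀, map_one])
      obtain ⟨n, hn⟩ : ∃ n : K, φ n = π * σ π := by
        refine ⟨h (π • x₀) / h x₀, ?_⟩
        have e : φ (h (π • x₀) / h x₀) * φ (h x₀) = (π * σ π) * φ (h x₀) := by
          rw [← map_mul, div_mul_cancel₀ _ hx₀]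
          exact hherm π x₀
        exact hNunit.mul_right_cancel e
      obtain ⟨t, ht⟩ : ∃ t : K, φ t = π + σ π := by
        refine ⟨(h ((π + 1) • x₀) - h (π • x₀) - h x₀) / h x₀, ?_⟩
        have e : φ ((h ((π + 1) • x₀) - h (π • x₀) - h x₀) / h x₀) * φ (h x₀)
            = (π + σ π) * φ (h x₀) := by
          rw [← map_mul, div_mul_cancel₀ _ hx₀, map_sub, map_sub, hherm, hherm,
            map_add, map_one]
          ring
        exact hNunit.mul_right_cancel e
      have hππ : π * π = φ t * π - φ n := by rw [ht, hn]; ring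
      -- key : K-semilinearity of B
      have key : ∀ (c : K) (v w : V), B (φ c • v) w = φ c * B v w := by
        rcases eq_or_ne (2 : K) 0 with h2 | h2
        · -- characteristic 2
          intro c v w
          have h2L : (2 : L) = 0 := by rw [← map_ofNat φ 2, h2, map_zero]
          have hτ : π + σ π = (u : L) := by
            rw [hu]
            have h2π : (2 : L) * π = 0 := by rw [h2L, zero_mul]
            linear_combination h2π
          have hG := G c v w
          rw [hτ, h2L, zero_mul] at hG
          have hY : B (φ c • v) w - φ c * B v w = 0 := by
            have h1 : (↑u⁻¹ : L) * ((u : L) * (B (φ c • v) w - φ c * B v w)) = 0 := by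
              rw [← hG, mul_zero]
            rwa [← mul_assoc, Units.inv_mul, one_mul] at h1
          linear_combination hY
        · -- characteristic ≠ 2
          have hφ2 : φ (2 : K) = 2 := map_ofNat φ 2
          have two_cancel : ∀ X Y : L, 2 * X = 2 * Y → X = Y := by
            intro X Y hXY
            have h1 : φ (2 : K)⁻¹ * (2 * X) = φ (2 : K)⁻¹ * (2 * Y) := by rw [hXY]
            rw [← mul_assoc, ← mul_assoc, ← hφ2, ← map_mul, inv_mul_cancel₀ h2,
              map_one, one_mul, one_mul] at h1
            exact h1
          have R2 : ∀ (e : K) (v w : V),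
              B ((φ e * φ e) • v) w = (φ e + φ e) * B (φ e • v) w - φ e * φ e * B v w := by
            intro e v w
            have hp := Bpolar (φ e) 1 (φ e • v) w
            simp only [one_smul, map_one, mul_one, one_mul, hσφ] at hp
            rw [smul_smul] at hp
            have hs := Bscale (φ e) v w
            rw [hσφ] at hs
            linear_combination hp - hs
          have R5 : ∀ (e d : K) (v w : V),
              B (φ e • (φ d • v)) w - φ e * B (φ d • v) w
                = φ d * (B (φ e • v) w - φ e * B v w) := by
            intro e d v w
            have hed := R2 (e + d) v w
            rw [map_add] at hed
            have hexp : ((φ e + φ d) * (φ e + φ d)) • v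
                = (φ e * φ e) • v + (φ e * φ d) • v + ((φ e * φ d) • v + (φ d * φ d) • v) := by
              rw [show (φ e + φ d) * (φ e + φ d)
                  = φ e * φ e + φ e * φ d + (φ e * φ d + φ d * φ d) from by ring,
                add_smul, add_smul, add_smul]
            rw [hexp, Badd1, Badd1, Badd1, add_smul (φ e) (φ d) v, Badd1] at hed
            have he := R2 e v w
            have hd := R2 d v w
            have hmid : 2 * (B ((φ e * φ d) • v) w - φ e * φ d * B v w)
                = 2 * (φ e * (B (φ d • v) w - φ d * B v w)
                     + φ d * (B (φ e • v) w - φ e * B v w)) := by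
              linear_combination hed - he - hd
            have hmid' := two_cancel _ _ hmid
            rw [smul_smul]
            linear_combination hmid'
          intro c v w
          have Gxy := G c v w
          have Gpx := G c (π • v) w
          have hππx : π • (π • v) = φ t • (π • v) - φ n • v := by
            rw [smul_smul, hππ, sub_smul, mul_smul]
          have eA : B (φ c • (π • (π • v))) w
              = B (φ c • (φ t • (π • v))) w - B (φ c • (φ n • v)) w := by
            rw [hππx, smul_sub, Bsub1]
          have eB : B (π • (π • v)) w = B (φ t • (π • v)) w - B (φ n • v) w := by
            rw [hππx, Bsub1]
          have r1 := R5 c t (π • v) w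
          have r2 := R5 c n v w
          have hcomb : 2 * (φ t * (B (φ c • (π • v)) w - φ c * B (π • v) w)
              - φ n * (B (φ c • v) w - φ c * B v w))
              = (π + σ π) * (B (φ c • (π • v)) w - φ c * B (π • v) w) := by
            linear_combination Gpx - 2 * eA + (2 * φ c) * eB - 2 * r1 + 2 * r2
          have hfin : (u : L) * (u : L) * (B (φ c • v) w - φ c * B v w) = 0 := by
            rw [hu]
            linear_combination (-(π + σ π)) * Gxy + 2 * hcomb
              - (4 * (B (φ c • (π • v)) w - φ c * B (π • v) w)) * ht
              + (4 * (B (φ c • v) w - φ c * B v w)) * hn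
          have hA : B (φ c • v) w - φ c * B v w = 0 := by
            have h1 : ((↑u⁻¹ : L) * (↑u⁻¹ : L))
                * ((u : L) * (u : L) * (B (φ c • v) w - φ c * B v w)) = 0 := by
              rw [hfin, mul_zero]
            have hiu : (↑u⁻¹ : L) * (u : L) = 1 := Units.inv_mul u
            have h2' : ((↑u⁻¹ : L) * (↑u⁻¹ : L))
                * ((u : L) * (u : L) * (B (φ c • v) w - φ c * B v w))
                = B (φ c • v) w - φ c * B v w := by
              linear_combination ((↑u⁻¹ : L) * (u : L) + 1) * (B (φ c • v) w - φ c * B v w) * hiu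
            rw [h2'] at h1
            exact h1
          linear_combination hA
      -- decomposition of l
      intro l x y
      obtain ⟨c, d, hl⟩ : ∃ c d : K, l = φ c + φ d * π := by
        have hmem : l ∈ Algebra.adjoin K {π} := by rw [hπgen]; trivial
        induction hmem using Algebra.adjoin_induction with
        | mem w hw =>
          exact ⟨0, 1, by simp [Set.mem_singleton_iff.mp hw]⟩
        | algebraMap r => exact ⟨r, 0, by simp [hφ]⟩
        | add a b ha hb iha ihb =>
          obtain ⟨c1, d1, e1⟩ := iha
          obtain ⟨c2, d2, e2⟩ := ihb
          exact ⟨c1 + c2, d1 + d2, by rw [e1, e2, map_add, map_add]; ring⟩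
        | mul a b ha hb iha ihb =>
          obtain ⟨c1, d1, e1⟩ := iha
          obtain ⟨c2, d2, e2⟩ := ihb
          refine ⟨c1 * c2 - d1 * d2 * n, c1 * d2 + d1 * c2 + d1 * d2 * t, ?_⟩
          rw [e1, e2, map_sub, map_add, map_add, map_mul, map_mul, map_mul, map_mul,
            map_mul, map_mul, map_mul]
          linear_combination (φ d1 * φ d2) * hππ
      have e1 : B (l • x) y = φ c * B x y + φ d * B (π • x) y := by
        rw [hl, add_smul, mul_smul, Badd1, key c x y, key d (π • x) y]
      have hππx : π • (π • x) = φ t • (π • x) - φ n • x := by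
        rw [smul_smul, hππ, sub_smul, mul_smul]
      have hv : π • (l • x) = φ c • (π • x) + φ d • (π • (π • x)) := by
        rw [hl, add_smul, mul_smul, smul_add, smul_comm π (φ c) x, smul_comm π (φ d) (π • x)]
      have e2 : B (π • (l • x)) y
          = φ c * B (π • x) y + φ d * (φ t * B (π • x) y - φ n * B x y) := by
        rw [hv, Badd1, key c (π • x) y, hππx,
          key d (φ t • (π • x) - φ n • x) y, Bsub1, key t (π • x) y, key n x y]
      rw [e1, e2, hl]
      linear_combination (-(φ d * B (π • x) y)) * ht + (φ d * B x y) * hn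
  -- assemble
  refine ⟨fun x y => (↑u⁻¹ : L) * (σ π * B x y - B (π • x) y), ⟨?_, ?_, ?_, ?_⟩, ?_⟩
  · intro x x' y
    simp only
    rw [Badd1 x x' y, show π • (x + x') = π • x + π • x' from smul_add π x x', Badd1]
    ring
  · intro l x y
    simp only
    linear_combination (↑u⁻¹ : L) * main l x y
  · intro x y
    simp only
    rw [map_mul, map_sub, map_mul, hσuinv, hσinv, hσB, hσB]
    have hbp := BP x y
    have hs := Bsymm y x
    linear_combination (↑u⁻¹ : L) * π * hs - (↑u⁻¹ : L) * hbp
  · intro x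
    simp only
    have h1 := hBxx x
    have h2 := hBdiagπ x
    rw [h1, h2]
    have h3 : σ π * (2 * φ (h x)) - (π + σ π) * φ (h x) = (u : L) * φ (h x) := by
      rw [hu]; ring
    rw [h3, ← mul_assoc, Units.inv_mul, one_mul]
  · intro s' hs'
    obtain ⟨hadd, hsmul, hherm', hdiag⟩ := hs'
    funext x y
    have hadd2 : ∀ a b b', s' a (b + b') = s' a b + s' a b' := by
      intro a b b'
      rw [hherm' a (b + b'), hadd b b' a, map_add, ← hherm' a b, ← hherm' a b']
    have hσs : ∀ a b, σ (s' a b) = s' b a := by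
      intro a b; rw [hherm' a b, hσinv]
    have eq1 : ∀ a b, s' a b + s' b a = B a b := by
      intro a b
      have e := hdiag (a + b)
      rw [hadd a b (a + b), hadd2 a a b, hadd2 b a b, hdiag a, hdiag b] at e
      simp only [hBdef]
      linear_combination e
    have eq2 : ∀ a b, π * s' a b + σ π * s' b a = B (π • a) b := by
      intro a b
      have e := eq1 (π • a) b
      rw [hsmul π a b] at e
      have e2 : s' b (π • a) = σ π * s' b a := by
        rw [hherm' b (π • a), hsmul π a b, map_mul, hσs]
      rw [e2] at e
      linear_combination e
    show s' x y = (↑u⁻¹ : L) * (σ π * B x y - B (π • x) y)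
    have e5 : (u : L) * s' x y = σ π * B x y - B (π • x) y := by
      rw [hu]
      linear_combination σ π * eq1 x y - eq2 x y
    rw [← e5, ← mul_assoc, Units.inv_mul, one_mul]
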